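/- Let d ≥ 1 and α, β ∈ ℝ satisfy α + β > d. Then there is a constant C such that for all n ∈ ℤ^d, the sum over pairs (n₁, n₂) with n₁ + n₂ = n and |n₁| ∼ |n₂| (i.e. |n₁| ≤ 2|n₂| and |n₂| ≤ 2|n₁|) of ⟨n₁⟩^{-α} ⟨n₂⟩^{-β} is at most C ⟨n⟩^{d - α - β}. -/

import Mathlib

open scoped BigOperators

/-- Japanese bracket `⟨m⟩ = (1 + |m|²)^(1/2)` of a lattice point `m ∈ ℤ^d`. -/
noncomputable def jbZ (d : ℕ) (m : Fin d → ℤ) : ℝ :=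
  Real.sqrt (1 + ∑ i, ((m i : ℝ)) ^ 2)

/-- Euclidean norm of a lattice point `m ∈ ℤ^d`. -/
noncomputable def enZ (d : ℕ) (m : Fin d → ℤ) : ℝ :=
  Real.sqrt (∑ i, ((m i : ℝ)) ^ 2)

lemma sumsq_nonneg (d : ℕ) (m : Fin d → ℤ) : 0 ≤ ∑ i, ((m i : ℝ)) ^ 2 :=
  Finset.sum_nonneg fun i _ => sq_nonneg _

lemma one_le_jbZ (d : ℕ) (m : Fin d → ℤ) : 1 ≤ jbZ d m := by
  rw [jbZ]
  have h1 : (1:ℝ) ≤ 1 + ∑ i, ((m i : ℝ)) ^ 2 := by linarith [sumsq_nonneg d m]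
  nlinarith [Real.sq_sqrt (le_trans zero_le_one h1), Real.sqrt_nonneg (1 + ∑ i, ((m i : ℝ)) ^ 2)]

lemma jbZ_pos (d : ℕ) (m : Fin d → ℤ) : 0 < jbZ d m :=
  lt_of_lt_of_le one_pos (one_le_jbZ d m)

lemma jbZ_sq (d : ℕ) (m : Fin d → ℤ) : jbZ d m ^ 2 = 1 + ∑ i, ((m i : ℝ)) ^ 2 := by
  rw [jbZ, Real.sq_sqrt (by linarith [sumsq_nonneg d m])]

lemma enZ_sq (d : ℕ) (m : Fin d → ℤ) : enZ d m ^ 2 = ∑ i, ((m i : ℝ)) ^ 2 := by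
  rw [enZ, Real.sq_sqrt (sumsq_nonneg d m)]

lemma enZ_nonneg (d : ℕ) (m : Fin d → ℤ) : 0 ≤ enZ d m := Real.sqrt_nonneg _

lemma enZ_eq_norm (d : ℕ) (c : Fin d → ℤ) :
    enZ d c = @Norm.norm (EuclideanSpace ℝ (Fin d)) _ (WithLp.toLp 2 (fun i => ((c i : ℝ)))) := by
  rw [EuclideanSpace.norm_eq, enZ]
  congr 1
  refine Finset.sum_congr rfl fun i _ => ?_
  rw [Real.norm_eq_abs, sq_abs]

/-- triangle inequality -/
lemma enZ_triangle (d : ℕ) (a b : Fin d → ℤ) : enZ d (a + b) ≤ enZ d a + enZ d b := by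
  rw [enZ_eq_norm, enZ_eq_norm, enZ_eq_norm]
  have : (WithLp.toLp 2 (fun i => (((a + b) i : ℤ) : ℝ)) : EuclideanSpace ℝ (Fin d))
      = (WithLp.toLp 2 (fun i => ((a i : ℝ))) : EuclideanSpace ℝ (Fin d)) + WithLp.toLp 2 (fun i => ((b i : ℝ))) := by
    ext i; simp [Pi.add_apply]
  rw [this]
  exact norm_add_le _ _

/-- comparability transfers to brackets -/
lemma jbZ_le_two_mul (d : ℕ) (a b : Fin d → ℤ) (h : enZ d a ≤ 2 * enZ d b) :
    jbZ d a ≤ 2 * jbZ d b := by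
  have h2 : jbZ d a ^ 2 ≤ (2 * jbZ d b) ^ 2 := by
    have ha := enZ_sq d a; have hb := enZ_sq d b
    have : enZ d a ^ 2 ≤ 4 * enZ d b ^ 2 := by nlinarith [enZ_nonneg d a, enZ_nonneg d b]
    rw [jbZ_sq, mul_pow, jbZ_sq]
    nlinarith
  have := abs_le_of_sq_le_sq' h2 (by nlinarith [jbZ_pos d b])
  linarith [this.2]

lemma jbZ_n_le (d : ℕ) (n n₁ : Fin d → ℤ) (h : enZ d (n - n₁) ≤ 2 * enZ d n₁) :
    jbZ d n ≤ 3 * jbZ d n₁ := by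
  have htri : enZ d n ≤ enZ d n₁ + enZ d (n - n₁) := by
    have := enZ_triangle d n₁ (n - n₁)
    simpa using this
  have h3 : enZ d n ≤ 3 * enZ d n₁ := by linarith
  have h2 : jbZ d n ^ 2 ≤ (3 * jbZ d n₁) ^ 2 := by
    have : enZ d n ^ 2 ≤ 9 * enZ d n₁ ^ 2 := by nlinarith [enZ_nonneg d n, enZ_nonneg d n₁]
    rw [jbZ_sq, mul_pow, jbZ_sq, ← enZ_sq, ← enZ_sq]
    nlinarith
  have := abs_le_of_sq_le_sq' h2 (by nlinarith [jbZ_pos d n₁])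
  linarith [this.2]

/-- power comparison under 2-comparability -/
lemma rpow_comp (x y : ℝ) (hx : 0 < x) (hy : 0 < y) (h1 : y ≤ 2 * x) (h2 : x ≤ 2 * y) (t : ℝ) :
    y ^ t ≤ 2 ^ |t| * x ^ t := by
  rcases le_or_gt 0 t with ht | ht
  · have : y ^ t ≤ (2 * x) ^ t := Real.rpow_le_rpow hy.le h1 ht
    rw [abs_of_nonneg ht]
    rwa [Real.mul_rpow (by norm_num) hx.le] at this
  · have hxy : x / 2 ≤ y := by linarith
    have : y ^ t ≤ (x / 2) ^ t :=
      Real.rpow_le_rpow_of_nonpos (by positivity) hxy ht.le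
    rw [abs_of_neg ht]
    calc y ^ t ≤ (x / 2) ^ t := this
      _ = 2 ^ (-t) * x ^ t := by
          rw [Real.div_rpow hx.le (by norm_num),
            Real.rpow_neg (by norm_num : (0:ℝ) ≤ 2) t, div_eq_mul_inv, mul_comm]

lemma abs_coord_le_jbZ (d : ℕ) (m : Fin d → ℤ) (i : Fin d) : |((m i : ℝ))| ≤ jbZ d m := by
  have h : ((m i : ℝ))^2 ≤ jbZ d m ^ 2 := by
    rw [jbZ_sq]
    have : ((m i:ℝ))^2 ≤ ∑ j, ((m j:ℝ))^2 :=
      Finset.single_le_sum (f := fun j => ((m j:ℝ))^2) (fun j _ => sq_nonneg _) (Finset.mem_univ i)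
    linarith
  exact abs_le.mpr (abs_le_of_sq_le_sq' h (jbZ_pos d m).le)

lemma tail_bound (d : ℕ) (s : ℝ) (hds : (d:ℝ) < s) :
    ∃ C > 0, ∀ R : ℝ, 1 ≤ R → ∀ S : Finset (Fin d → ℤ),
      (∀ m ∈ S, R ≤ jbZ d m) →
      ∑ m ∈ S, jbZ d m ^ (-s) ≤ C * R ^ ((d:ℝ) - s) := by
  have hs0 : 0 < s := lt_of_le_of_lt (Nat.cast_nonneg d) hds
  set r : ℝ := (2:ℝ) ^ ((d:ℝ) - s) with hr
  have hr0 : 0 < r := Real.rpow_pos_of_pos (by norm_num) _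
  have hr1 : r < 1 := Real.rpow_lt_one_of_one_lt_of_neg (by norm_num) (by linarith)
  have h1r : (0:ℝ) < 1 - r := by linarith
  have hC : (0:ℝ) < (8:ℝ)^d * (2:ℝ)^(s - (d:ℝ)) * (1 - r)⁻¹ :=
    mul_pos (mul_pos (by positivity) (by positivity)) (inv_pos.mpr h1r)
  refine ⟨(8:ℝ)^d * (2:ℝ)^(s - (d:ℝ)) * (1 - r)⁻¹, hC, ?_⟩
  intro R hR S hS
  have hRpos : (0:ℝ) < R := lt_of_lt_of_le one_pos hR
  classical
  rcases eq_or_ne S ∅ with rfl | hSne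
  · simp only [Finset.sum_empty]
    exact (mul_pos hC (Real.rpow_pos_of_pos hRpos _)).le
  set f : (Fin d → ℤ) → ℕ := fun m => Nat.log 2 ⌊jbZ d m⌋₊ with hf
  have hfl : ∀ m : Fin d → ℤ, ((2:ℝ)^(f m) : ℝ) ≤ jbZ d m := by
    intro m
    have h1 : 1 ≤ ⌊jbZ d m⌋₊ := Nat.le_floor (by exact_mod_cast one_le_jbZ d m)
    have h2 := Nat.pow_log_le_self 2 (x := ⌊jbZ d m⌋₊) (by omega)
    calc ((2:ℝ)^(f m)) = ((2^(f m) : ℕ) : ℝ) := by push_cast; ring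
      _ ≤ (⌊jbZ d m⌋₊ : ℝ) := by exact_mod_cast h2
      _ ≤ jbZ d m := Nat.floor_le (jbZ_pos d m).le
  have hfu : ∀ m : Fin d → ℤ, jbZ d m < (2:ℝ)^(f m + 1) := by
    intro m
    have h1 := Nat.lt_pow_succ_log_self (by norm_num : 1 < 2) ⌊jbZ d m⌋₊
    have h1' : ⌊jbZ d m⌋₊ + 1 ≤ 2^(f m + 1) := h1
    calc jbZ d m < (⌊jbZ d m⌋₊ : ℝ) + 1 := Nat.lt_floor_add_one _
      _ ≤ (2:ℝ)^(f m + 1) := by exact_mod_cast h1'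
  set T : Finset ℕ := S.image f with hT
  have hTne : T.Nonempty := (Finset.image_nonempty).mpr (Finset.nonempty_of_ne_empty hSne)
  set J₀ : ℕ := T.min' hTne with hJ₀
  have hJ₀le : ∀ j ∈ T, J₀ ≤ j := fun j hj => Finset.min'_le T j hj
  have hrJ : r ^ J₀ ≤ (R/2) ^ ((d:ℝ) - s) := by
    obtain ⟨m₀, hm₀S, hm₀⟩ := Finset.mem_image.mp (T.min'_mem hTne)
    have h1 : R ≤ jbZ d m₀ := hS m₀ hm₀S
    have h2 : jbZ d m₀ < (2:ℝ)^(J₀ + 1) := by rw [hJ₀, ← hm₀]; exact hfu m₀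
    have h3 : R / 2 ≤ (2:ℝ)^J₀ := by
      rw [div_le_iff₀ (by norm_num)]
      calc R ≤ jbZ d m₀ := h1
        _ ≤ (2:ℝ)^(J₀+1) := h2.le
        _ = 2^J₀ * 2 := by ring
    have h4 : ((2:ℝ)^J₀) ^ ((d:ℝ) - s) ≤ (R/2) ^ ((d:ℝ) - s) :=
      Real.rpow_le_rpow_of_nonpos (by positivity) h3 (by linarith)
    calc r ^ J₀ = ((2:ℝ)^J₀) ^ ((d:ℝ) - s) := by
          rw [← Real.rpow_natCast r J₀, hr, ← Real.rpow_natCast (2:ℝ) J₀,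
            ← Real.rpow_mul (by norm_num), ← Real.rpow_mul (by norm_num), mul_comm]
      _ ≤ (R/2) ^ ((d:ℝ) - s) := h4
  have hinner : ∀ j ∈ T,
      ∑ m ∈ S.filter (fun m => f m = j), jbZ d m ^ (-s) ≤ (8:ℝ)^d * r ^ j := by
    intro j _
    have h2pow : (1:ℝ) ≤ 2^(j+1) := by exact_mod_cast Nat.one_le_two_pow
    have hsub : S.filter (fun m => f m = j) ⊆
        Fintype.piFinset (fun _ : Fin d => Finset.Icc (-(2^(j+1):ℤ)) (2^(j+1))) := by
      intro m hm
      rw [Finset.mem_filter] at hm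
      rw [Fintype.mem_piFinset]
      intro i
      rw [Finset.mem_Icc]
      have h1 : |((m i : ℝ))| ≤ jbZ d m := abs_coord_le_jbZ d m i
      have h2 : jbZ d m < (2:ℝ)^(j + 1) := by rw [← hm.2]; exact hfu m
      have h3 : |((m i : ℝ))| ≤ ((2^(j+1):ℤ) : ℝ) := by push_cast; linarith
      have h4 : |m i| ≤ (2^(j+1):ℤ) := by exact_mod_cast h3
      exact abs_le.mp h4
    have hIccNat : (Finset.Icc (-(2^(j+1):ℤ)) (2^(j+1))).card = 2^(j+2)+1 := by
      rw [Int.card_Icc]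
      have e : ((2:ℤ)^(j+1) + 1 - -(2^(j+1))) = ((2^(j+2)+1 : ℕ) : ℤ) := by push_cast; ring
      rw [e, Int.toNat_natCast]
    have hIcc : ((Finset.Icc (-(2^(j+1):ℤ)) (2^(j+1))).card : ℝ) = 2*(2:ℝ)^(j+1)+1 := by
      rw [hIccNat]; push_cast; ring
    have hcard : ((S.filter (fun m => f m = j)).card : ℝ) ≤ ((2:ℝ)^(j+3))^d := by
      calc ((S.filter (fun m => f m = j)).card : ℝ)
          ≤ ((Fintype.piFinset (fun _ : Fin d =>
              Finset.Icc (-(2^(j+1):ℤ)) (2^(j+1)))).card : ℝ) := by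
            exact_mod_cast Finset.card_le_card hsub
        _ = (2*(2:ℝ)^(j+1)+1)^d := by
            rw [Fintype.card_piFinset, Finset.prod_const, Finset.card_univ, Fintype.card_fin,
              Nat.cast_pow, hIcc]
        _ ≤ ((2:ℝ)^(j+3))^d := by
            apply pow_le_pow_left₀ (by positivity)
            have e : (2:ℝ)^(j+3) = 4 * 2^(j+1) := by ring
            rw [e]; linarith
    have hterm : ∀ m ∈ S.filter (fun m => f m = j),
        jbZ d m ^ (-s) ≤ ((2:ℝ)^j) ^ (-s) := by
      intro m hm
      rw [Finset.mem_filter] at hm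
      refine Real.rpow_le_rpow_of_nonpos (by positivity) ?_ (by linarith)
      rw [← hm.2]; exact hfl m
    calc ∑ m ∈ S.filter (fun m => f m = j), jbZ d m ^ (-s)
        ≤ ((S.filter (fun m => f m = j)).card : ℝ) * ((2:ℝ)^j) ^ (-s) := by
          simpa using Finset.sum_le_card_nsmul _ _ _ hterm
      _ ≤ ((2:ℝ)^(j+3))^d * ((2:ℝ)^j) ^ (-s) :=
          mul_le_mul_of_nonneg_right hcard (Real.rpow_nonneg (by positivity) _)
      _ = (8:ℝ)^d * r ^ j := by
          have e1 : ((2:ℝ)^(j+3))^d = (8:ℝ)^d * ((2:ℝ)^j)^d := by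
            rw [← mul_pow]; congr 1; ring
          have e2 : r ^ j = ((2:ℝ)^j) ^ ((d:ℝ) - s) := by
            rw [← Real.rpow_natCast r j, hr, ← Real.rpow_natCast (2:ℝ) j,
              ← Real.rpow_mul (by norm_num), ← Real.rpow_mul (by norm_num), mul_comm]
          rw [e1, e2, mul_assoc]
          congr 1
          rw [← Real.rpow_natCast ((2:ℝ)^j) d, ← Real.rpow_add (by positivity),
            sub_eq_add_neg]
  have hsummable : Summable (fun k : ℕ => r^k) := summable_geometric_of_lt_one hr0.le hr1
  have hgeo : ∑ j ∈ T, r ^ j ≤ r ^ J₀ * (1 - r)⁻¹ := by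
    have e : ∑ j ∈ T, r ^ j = r ^ J₀ * ∑ j ∈ T, r ^ (j - J₀) := by
      rw [Finset.mul_sum]
      refine Finset.sum_congr rfl fun j hj => ?_
      rw [← pow_add]
      congr 1
      have := hJ₀le j hj
      omega
    have hinj : ∀ x ∈ T, ∀ y ∈ T, x - J₀ = y - J₀ → x = y := by
      intro x hx y hy hxy
      have hx' := hJ₀le x hx
      have hy' := hJ₀le y hy
      omega
    have einj : ∑ j ∈ T, r ^ (j - J₀) = ∑ k ∈ T.image (fun x => x - J₀), r ^ k :=
      (Finset.sum_image hinj).symm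
    rw [e, einj]
    refine mul_le_mul_of_nonneg_left ?_ (pow_nonneg hr0.le _)
    calc ∑ k ∈ T.image (fun x => x - J₀), r ^ k ≤ ∑' k : ℕ, r ^ k :=
          Summable.sum_le_tsum _ (fun k _ => pow_nonneg hr0.le _) hsummable
      _ = (1 - r)⁻¹ := tsum_geometric_of_lt_one hr0.le hr1
  calc ∑ m ∈ S, jbZ d m ^ (-s)
      = ∑ j ∈ T, ∑ m ∈ S.filter (fun m => f m = j), jbZ d m ^ (-s) :=
        (Finset.sum_fiberwise_of_maps_to (fun m hm => Finset.mem_image_of_mem f hm) _).symm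
    _ ≤ ∑ j ∈ T, (8:ℝ)^d * r ^ j := Finset.sum_le_sum hinner
    _ = (8:ℝ)^d * ∑ j ∈ T, r ^ j := by rw [Finset.mul_sum]
    _ ≤ (8:ℝ)^d * (r ^ J₀ * (1 - r)⁻¹) :=
        mul_le_mul_of_nonneg_left hgeo (by positivity)
    _ ≤ (8:ℝ)^d * ((R/2) ^ ((d:ℝ) - s) * (1 - r)⁻¹) :=
        mul_le_mul_of_nonneg_left
          (mul_le_mul_of_nonneg_right hrJ (inv_pos.mpr h1r).le) (by positivity)
    _ = (8:ℝ)^d * (2:ℝ)^(s - (d:ℝ)) * (1 - r)⁻¹ * R ^ ((d:ℝ) - s) := by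
        rw [Real.div_rpow hRpos.le (by norm_num)]
        rw [show (2:ℝ) ^ (s - (d:ℝ)) = ((2:ℝ) ^ ((d:ℝ) - s))⁻¹ by
          rw [← Real.rpow_neg (by norm_num), neg_sub]]
        field_simp
        try ring

/-- Resonant discrete convolution estimate: for `α + β > d`, the sum of
`⟨n₁⟩^{-α} ⟨n₂⟩^{-β}` over `n₁ + n₂ = n` with `|n₁| ∼ |n₂|` (comparable up to
a factor 2) is `≲ ⟨n⟩^{d-α-β}` (stated via arbitrary finite partial sums over
the constrained set). -/
theorem stmt1 (d : ℕ) (hd : 1 ≤ d) (α β : ℝ) (hαβ : (d : ℝ) < α + β) :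
    ∃ C > 0, ∀ n : Fin d → ℤ, ∀ S : Finset (Fin d → ℤ),
      (∀ n₁ ∈ S, enZ d n₁ ≤ 2 * enZ d (n - n₁) ∧ enZ d (n - n₁) ≤ 2 * enZ d n₁) →
      ∑ n₁ ∈ S, (jbZ d n₁) ^ (-α) * (jbZ d (n - n₁)) ^ (-β)
        ≤ C * (jbZ d n) ^ ((d : ℝ) - α - β) := by
  obtain ⟨C₁, hC₁, hC⟩ := tail_bound d (α + β) hαβ
  set A : ℝ := (2:ℝ) ^ |β| with hA
  have hApos : 0 < A := Real.rpow_pos_of_pos (by norm_num) _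
  refine ⟨A * C₁ * (3:ℝ) ^ (α + β - (d:ℝ)), by positivity, ?_⟩
  intro n S hS
  have hjn := jbZ_pos d n
  set R : ℝ := max 1 (jbZ d n / 3) with hR
  have hR1 : 1 ≤ R := le_max_left _ _
  have hRn : jbZ d n / 3 ≤ R := le_max_right _ _
  have hRpos : (0:ℝ) < R := lt_of_lt_of_le one_pos hR1
  have hpt : ∀ n₁ ∈ S, jbZ d n₁ ^ (-α) * jbZ d (n - n₁) ^ (-β)
      ≤ A * jbZ d n₁ ^ (-(α+β)) := by
    intro n₁ hn₁
    obtain ⟨h1, h2⟩ := hS n₁ hn₁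
    have hc1 : jbZ d n₁ ≤ 2 * jbZ d (n - n₁) := jbZ_le_two_mul d n₁ (n - n₁) h1
    have hc2 : jbZ d (n - n₁) ≤ 2 * jbZ d n₁ := jbZ_le_two_mul d (n - n₁) n₁ h2
    have hb : jbZ d (n - n₁) ^ (-β) ≤ 2 ^ |(-β)| * jbZ d n₁ ^ (-β) :=
      rpow_comp (jbZ d n₁) (jbZ d (n - n₁)) (jbZ_pos _ _) (jbZ_pos _ _) hc2 hc1 (-β)
    rw [abs_neg] at hb
    calc jbZ d n₁ ^ (-α) * jbZ d (n - n₁) ^ (-β)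
        ≤ jbZ d n₁ ^ (-α) * (2 ^ |β| * jbZ d n₁ ^ (-β)) :=
          mul_le_mul_of_nonneg_left hb (Real.rpow_nonneg (jbZ_pos d n₁).le _)
      _ = A * jbZ d n₁ ^ (-(α+β)) := by
          rw [hA, neg_add, Real.rpow_add (jbZ_pos d n₁)]
          ring
  have hlow : ∀ m ∈ S, R ≤ jbZ d m := by
    intro m hm
    obtain ⟨h1, h2⟩ := hS m hm
    have h3 : jbZ d n ≤ 3 * jbZ d m := jbZ_n_le d n m h2
    exact max_le (one_le_jbZ d m) (by linarith)
  have hstep : R ^ ((d:ℝ) - (α+β)) ≤ (3:ℝ)^(α+β-(d:ℝ)) * jbZ d n ^ ((d:ℝ) - α - β) := by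
    have ha : R ^ ((d:ℝ) - (α+β)) ≤ (jbZ d n / 3) ^ ((d:ℝ) - (α+β)) :=
      Real.rpow_le_rpow_of_nonpos (by positivity) hRn (by linarith)
    have hb : (jbZ d n / 3) ^ ((d:ℝ) - (α+β))
        = (3:ℝ)^(α+β-(d:ℝ)) * jbZ d n ^ ((d:ℝ) - α - β) := by
      rw [Real.div_rpow hjn.le (by norm_num),
        show (3:ℝ)^(α+β-(d:ℝ)) = ((3:ℝ)^((d:ℝ)-(α+β)))⁻¹ by
          rw [← Real.rpow_neg (by norm_num), neg_sub],
        show (d:ℝ) - α - β = (d:ℝ) - (α+β) by ring]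
      field_simp
    linarith [hb ▸ ha]
  calc ∑ n₁ ∈ S, jbZ d n₁ ^ (-α) * jbZ d (n - n₁) ^ (-β)
      ≤ ∑ n₁ ∈ S, A * jbZ d n₁ ^ (-(α+β)) := Finset.sum_le_sum hpt
    _ = A * ∑ n₁ ∈ S, jbZ d n₁ ^ (-(α+β)) := by rw [Finset.mul_sum]
    _ ≤ A * (C₁ * R ^ ((d:ℝ) - (α+β))) :=
        mul_le_mul_of_nonneg_left (hC R hR1 S hlow) hApos.le
    _ ≤ A * (C₁ * ((3:ℝ)^(α+β-(d:ℝ)) * jbZ d n ^ ((d:ℝ) - α - β))) :=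
        mul_le_mul_of_nonneg_left
          (mul_le_mul_of_nonneg_left hstep hC₁.le) hApos.le
    _ = A * C₁ * (3:ℝ)^(α+β-(d:ℝ)) * jbZ d n ^ ((d:ℝ) - α - β) := by ring
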